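/- Let X be a nonempty compact metric space and μ a finite Borel measure on X with full support (μ(U) > 0 for every nonempty open U ⊆ X). Let u, w : X → ℝ be continuous with min u = 0, max u = l > 0 and min w = 0, and suppose argmin(u) ∩ argmin(w) = ∅. For t ∈ [0,1] set h_t := min(t·l, u) + w (pointwise minimum with the constant t·l) and g(t) := ∫_X normalize(h_t) dμ. Then there exists δ₀ with 0 < δ₀ ≤ l such that for all t ∈ [0, δ₀/l]: (a) min h_t = t·l; (b) argmin(w) ⊆ argmin(h_t); (c) normalize(h_t) = w − max(t·l − u, 0) pointwise, so g(t) = ∫_X w dμ − ∫_X max(t·l − u, 0) dμ; (d) g is strictly decreasing on [0, δ₀/l]; (e) t ↦ osc(h_t) is monotone nonincreasing on [0, δ₀/l]. -/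
import Mathlib


open MeasureTheory Set

/-- The (attained) minimum of `f` on a nonempty compact space. -/
noncomputable def minF {X : Type*} (f : X → ℝ) : ℝ := sInf (Set.range f)

/-- The (attained) maximum of `f` on a nonempty compact space. -/
noncomputable def maxF {X : Type*} (f : X → ℝ) : ℝ := sSup (Set.range f)

/-- The oscillation `max f - min f`. -/
noncomputable def oscF {X : Type*} (f : X → ℝ) : ℝ := maxF f - minF f

/-- `normalize f = f - min f`. -/
noncomputable def normF {X : Type*} (f : X → ℝ) : X → ℝ := fun x => f x - minF f

/-- The minimizer set of `f`. -/
def argminF {X : Type*} (f : X → ℝ) : Set X := {x | f x = minF f}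

/-- The maximizer set of `f`. -/
def argmaxF {X : Type*} (f : X → ℝ) : Set X := {x | f x = maxF f}

section Helpers

variable {X : Type*} [TopologicalSpace X] [CompactSpace X] [Nonempty X] {f : X → ℝ}

lemma exists_minF (hf : Continuous f) : ∃ x, f x = minF f ∧ ∀ y, f x ≤ f y := by
  obtain ⟨x, -, hx'⟩ := isCompact_univ.exists_isMinOn Set.univ_nonempty hf.continuousOn
  have hx : ∀ y, f x ≤ f y := fun y => hx' (Set.mem_univ y)
  refine ⟨x, le_antisymm ?_ ?_, hx⟩
  · exact le_csInf (Set.range_nonempty f) (by rintro _ ⟨y, rfl⟩; exact hx y)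
  · exact csInf_le ⟨f x, by rintro _ ⟨y, rfl⟩; exact hx y⟩ ⟨x, rfl⟩

lemma minF_le (hf : Continuous f) (x : X) : minF f ≤ f x := by
  obtain ⟨y, hy, hmin⟩ := exists_minF hf
  exact hy ▸ hmin x

lemma le_minF (hf : Continuous f) {c : ℝ} (h : ∀ x, c ≤ f x) : c ≤ minF f :=
  le_csInf (Set.range_nonempty f) (by rintro _ ⟨y, rfl⟩; exact h y)

lemma exists_maxF (hf : Continuous f) : ∃ x, f x = maxF f ∧ ∀ y, f y ≤ f x := by
  obtain ⟨x, -, hx'⟩ := isCompact_univ.exists_isMaxOn Set.univ_nonempty hf.continuousOn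
  have hx : ∀ y, f y ≤ f x := fun y => hx' (Set.mem_univ y)
  refine ⟨x, le_antisymm ?_ ?_, hx⟩
  · exact le_csSup ⟨f x, by rintro _ ⟨y, rfl⟩; exact hx y⟩ ⟨x, rfl⟩
  · exact csSup_le (Set.range_nonempty f) (by rintro _ ⟨y, rfl⟩; exact hx y)

lemma le_maxF (hf : Continuous f) (x : X) : f x ≤ maxF f := by
  obtain ⟨y, hy, hmax⟩ := exists_maxF hf
  exact hy ▸ hmax x

lemma maxF_le (hf : Continuous f) {c : ℝ} (h : ∀ x, f x ≤ c) : maxF f ≤ c :=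
  csSup_le (Set.range_nonempty f) (by rintro _ ⟨y, rfl⟩; exact h y)

end Helpers

theorem stmt_7 {X : Type*} [MetricSpace X] [CompactSpace X] [Nonempty X]
    [MeasurableSpace X] [BorelSpace X]
    (μ : Measure X) [IsFiniteMeasure μ]
    (hfull : ∀ U : Set X, IsOpen U → U.Nonempty → 0 < μ U)
    (u w : X → ℝ) (hu : Continuous u) (hw : Continuous w)
    (l : ℝ) (hl : 0 < l) (humin : minF u = 0) (humax : maxF u = l)
    (hwmin : minF w = 0)
    (hdisj : argminF u ∩ argminF w = ∅) :
    ∃ δ₀ : ℝ, 0 < δ₀ ∧ δ₀ ≤ l ∧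
      ((∀ t ∈ Set.Icc (0:ℝ) (δ₀ / l),
          minF (fun x => min (t * l) (u x) + w x) = t * l) ∧
       (∀ t ∈ Set.Icc (0:ℝ) (δ₀ / l),
          argminF w ⊆ argminF (fun x => min (t * l) (u x) + w x)) ∧
       (∀ t ∈ Set.Icc (0:ℝ) (δ₀ / l), ∀ x : X,
          normF (fun x => min (t * l) (u x) + w x) x = w x - max (t * l - u x) 0) ∧
       (∀ t ∈ Set.Icc (0:ℝ) (δ₀ / l),
          (∫ x, normF (fun x => min (t * l) (u x) + w x) x ∂μ) =
            (∫ x, w x ∂μ) - ∫ x, max (t * l - u x) 0 ∂μ) ∧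
       StrictAntiOn
         (fun t => ∫ x, normF (fun x => min (t * l) (u x) + w x) x ∂μ)
         (Set.Icc (0:ℝ) (δ₀ / l)) ∧
       AntitoneOn (fun t => oscF (fun x => min (t * l) (u x) + w x))
         (Set.Icc (0:ℝ) (δ₀ / l))) := by
  have huw : Continuous (fun x => u x + w x) := hu.add hw
  -- c = min of u + w is positive
  obtain ⟨x₀, hx₀eq, hx₀min⟩ := exists_minF huw
  set c : ℝ := minF (fun x => u x + w x) with hc
  have hu0 : ∀ x, 0 ≤ u x := fun x => humin ▸ minF_le hu x
  have hw0 : ∀ x, 0 ≤ w x := fun x => hwmin ▸ minF_le hw x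
  have hcpos : 0 < c := by
    rcases lt_or_ge 0 c with h | h
    · exact h
    · exfalso
      have h1 : u x₀ + w x₀ ≤ 0 := hx₀eq.le.trans h
      have hu0' : u x₀ = 0 := le_antisymm (by linarith [hw0 x₀]) (hu0 x₀)
      have hw0' : w x₀ = 0 := le_antisymm (by linarith [hu0 x₀]) (hw0 x₀)
      have : x₀ ∈ argminF u ∩ argminF w := ⟨by simpa [argminF, humin] using hu0',
        by simpa [argminF, hwmin] using hw0'⟩
      simp [hdisj] at this
  have hcle : ∀ x, c ≤ u x + w x := fun x => minF_le huw x
  refine ⟨min c l, lt_min hcpos hl, min_le_right _ _, ?_⟩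
  set δ₀ := min c l with hδ
  -- basic facts about t in the interval
  have htl : ∀ t ∈ Set.Icc (0:ℝ) (δ₀ / l), 0 ≤ t * l ∧ t * l ≤ δ₀ := by
    intro t ht
    exact ⟨mul_nonneg ht.1 hl.le, (le_div_iff₀ hl).mp ht.2⟩
  have hcont : ∀ t : ℝ, Continuous (fun x => min (t * l) (u x) + w x) :=
    fun t => (continuous_const.min hu).add hw
  -- wherever w is minimal, u is large
  obtain ⟨xw, hxweq, hxwmin⟩ := exists_minF hw
  have hxw0 : w xw = 0 := by rw [hxweq, hwmin]
  have hxwu : c ≤ u xw := by have := hcle xw; linarith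
  -- (a)
  have ha : ∀ t ∈ Set.Icc (0:ℝ) (δ₀ / l),
      minF (fun x => min (t * l) (u x) + w x) = t * l := by
    intro t ht
    obtain ⟨ht0, htle⟩ := htl t ht
    apply le_antisymm
    · calc minF (fun x => min (t * l) (u x) + w x) ≤ min (t * l) (u xw) + w xw :=
            minF_le (hcont t) xw
        _ = t * l := by
            rw [hxw0, add_zero, min_eq_left]
            calc t * l ≤ δ₀ := htle
              _ ≤ c := min_le_left _ _
              _ ≤ u xw := hxwu
    · apply le_minF (hcont t)
      intro x
      rcases le_total (u x) (t * l) with h | h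
      · have : c ≤ u x + w x := hcle x
        have hδc : δ₀ ≤ c := min_le_left _ _
        rw [min_eq_right h]; linarith
      · rw [min_eq_left h]; linarith [hw0 x]
  -- (b)
  have hb : ∀ t ∈ Set.Icc (0:ℝ) (δ₀ / l),
      argminF w ⊆ argminF (fun x => min (t * l) (u x) + w x) := by
    intro t ht x hx
    obtain ⟨ht0, htle⟩ := htl t ht
    have hwx : w x = 0 := by rw [hx.out, hwmin]
    have hux : c ≤ u x := by have := hcle x; linarith
    have : min (t * l) (u x) + w x = t * l := by
      rw [hwx, add_zero, min_eq_left]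
      calc t * l ≤ δ₀ := htle
        _ ≤ c := min_le_left _ _
        _ ≤ u x := hux
    exact Set.mem_setOf.mpr (by rw [ha t ht]; exact this)
  -- (c)
  have hcq : ∀ t ∈ Set.Icc (0:ℝ) (δ₀ / l), ∀ x : X,
      normF (fun x => min (t * l) (u x) + w x) x = w x - max (t * l - u x) 0 := by
    intro t ht x
    rw [normF, ha t ht]
    rcases le_total (u x) (t * l) with h | h
    · rw [min_eq_right h, max_eq_left (by linarith)]; ring
    · rw [min_eq_left h, max_eq_right (by linarith)]; ring
  -- integrability
  have hint : ∀ f : X → ℝ, Continuous f → Integrable f μ := fun f hf =>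
    hf.integrable_of_hasCompactSupport (isClosed_tsupport _).isCompact
  have hintw : Integrable w μ := hint w hw
  have hφcont : ∀ t : ℝ, Continuous (fun x => max (t * l - u x) 0) :=
    fun t => (continuous_const.sub hu).max continuous_const
  have hintφ : ∀ t : ℝ, Integrable (fun x => max (t * l - u x) 0) μ :=
    fun t => hint _ (hφcont t)
  -- (d)
  have hd : ∀ t ∈ Set.Icc (0:ℝ) (δ₀ / l),
      (∫ x, normF (fun x => min (t * l) (u x) + w x) x ∂μ) =
        (∫ x, w x ∂μ) - ∫ x, max (t * l - u x) 0 ∂μ := by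
    intro t ht
    rw [show (fun x => normF (fun x => min (t * l) (u x) + w x) x)
        = fun x => w x - max (t * l - u x) 0 from funext (hcq t ht)]
    exact integral_sub hintw (hintφ t)
  refine ⟨ha, hb, hcq, hd, ?_, ?_⟩
  -- strict antitone
  · intro s hs t ht hst
    simp only
    rw [hd s hs, hd t ht]
    have key : ∫ x, max (s * l - u x) 0 ∂μ < ∫ x, max (t * l - u x) 0 ∂μ := by
      have hdiff : ∀ x, 0 ≤ max (t * l - u x) 0 - max (s * l - u x) 0 := by
        intro x
        have : s * l ≤ t * l := by nlinarith [hl]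
        have := max_le_max (sub_le_sub_right this (u x)) (le_refl (0:ℝ))
        linarith
      have hintd : Integrable (fun x => max (t * l - u x) 0 - max (s * l - u x) 0) μ :=
        (hintφ t).sub (hintφ s)
      have hpos : 0 < ∫ x, (max (t * l - u x) 0 - max (s * l - u x) 0) ∂μ := by
        rw [integral_pos_iff_support_of_nonneg hdiff hintd]
        have htlpos : 0 < t * l := mul_pos (hs.1.trans_lt hst) hl
        have hsub : {x | u x < t * l} ⊆
            Function.support (fun x => max (t * l - u x) 0 - max (s * l - u x) 0) := by
          intro x hx
          have hx' : u x < t * l := hx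
          have hstl : s * l < t * l := by nlinarith [hl]
          simp only [Function.mem_support]
          rcases le_total (s * l) (u x) with h | h
          · rw [max_eq_left (show (0:ℝ) ≤ t * l - u x by linarith),
              max_eq_right (show s * l - u x ≤ (0:ℝ) by linarith)]
            intro hcontra; rw [sub_zero] at hcontra; linarith
          · rw [max_eq_left (show (0:ℝ) ≤ t * l - u x by linarith),
              max_eq_left (show (0:ℝ) ≤ s * l - u x by linarith)]
            intro hcontra; nlinarith
        refine lt_of_lt_of_le ?_ (measure_mono hsub)
        apply hfull _ (isOpen_lt hu continuous_const)
        obtain ⟨xu, hxueq, _⟩ := exists_minF hu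
        exact ⟨xu, by simp only [Set.mem_setOf_eq]; rw [hxueq, humin]; exact htlpos⟩
      rw [integral_sub (hintφ t) (hintφ s)] at hpos
      linarith
    linarith
  -- antitone oscillation
  · intro s hs t ht hst
    simp only
    have hmins := ha s hs
    have hmint := ha t ht
    have htsl : 0 ≤ (t - s) * l := mul_nonneg (by linarith) hl.le
    have hmax : maxF (fun x => min (t * l) (u x) + w x)
        ≤ maxF (fun x => min (s * l) (u x) + w x) + (t - s) * l := by
      apply maxF_le (hcont t)
      intro x
      have h1 : min (t * l) (u x) ≤ min (s * l) (u x) + (t - s) * l := by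
        rcases le_total (u x) (s * l) with h | h
        · rw [min_eq_right h, min_eq_right (by nlinarith)]; linarith
        · rw [min_eq_left h]
          have := min_le_left (t * l) (u x)
          linarith
      have h2 : min (s * l) (u x) + w x ≤ maxF (fun x => min (s * l) (u x) + w x) :=
        le_maxF (hcont s) x
      linarith
    rw [oscF, oscF, hmins, hmint]
    have : s * l + (t - s) * l = t * l := by ring
    linarith
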